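/- Let $\{N_t(s,a)\}_{t \ge 0}$ be a family of real-valued random processes indexed by a finite set of pairs $(s,a)$, satisfying $N_0 = 0$ and the recursion $N_{t+1}(s,a) = (1-\beta_t)N_t(s,a) + \beta_t Z_t(s,a)$, where $Z_t(s,a)$ is bounded by $C$ almost surely and has conditional mean zero given the past. If the step sizes satisfy $(1-\beta_t)\beta_{t-1} \le \beta_t$, then for all $w \in \mathbb{R}$ and $t \ge 0$, $\mathbb{E}[\exp(w N_{t+1}(s,a))] \le \exp(w^2 \beta_t C^2 / 2)$. -/

import Mathlib

open MeasureTheory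

-- pointwise Hoeffding-type convexity bound
lemma exp_le_cosh_add (b C z : ℝ) (hC : 0 < C) (hz : |z| ≤ C) :
    Real.exp (b * z) ≤ Real.cosh (b * C) + (Real.sinh (b * C) / C) * z := by
  have hz1 : -C ≤ z := (abs_le.1 hz).1
  have hz2 : z ≤ C := (abs_le.1 hz).2
  set θ : ℝ := (C + z) / (2 * C) with hθdef
  have hθ0 : 0 ≤ θ := by rw [hθdef]; apply div_nonneg (by linarith) (by linarith)
  have hθ1 : 0 ≤ 1 - θ := by
    rw [hθdef]; rw [sub_nonneg, div_le_one (by positivity)]; linarith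
  have hsum : θ + (1 - θ) = 1 := by ring
  have hconv := convexOn_exp.2 (Set.mem_univ (b * C)) (Set.mem_univ (-(b * C)))
      hθ0 hθ1 hsum
  have hθC : θ * (2 * C) = C + z := by rw [hθdef]; field_simp
  have hz' : θ * (b * C) + (1 - θ) * (-(b * C)) = b * z := by
    linear_combination b * hθC
  simp only [smul_eq_mul] at hconv
  rw [hz'] at hconv
  refine hconv.trans (le_of_eq ?_)
  rw [Real.cosh_eq, Real.sinh_eq]
  field_simp [hθdef]
  rw [hθdef]; field_simp; ring_nf


set_option maxHeartbeats 1000000 in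
/-- MGF bound for the noise-accumulation recursion
`N_{t+1} = (1-βₜ)Nₜ + βₜ Zₜ` with bounded, conditionally mean-zero noise:
`E[exp(w N_{t+1}(s,a))] ≤ exp(w² βₜ C² / 2)` when `(1-βₜ)β_{t-1} ≤ βₜ`. -/
theorem mgf_bound_noise_recursion
    {Ω : Type*} {m0 : MeasurableSpace Ω} (μ : Measure Ω) [IsProbabilityMeasure μ]
    (ℱ : Filtration ℕ m0) {ι : Type*} [Fintype ι]
    (β : ℕ → ℝ) (C : ℝ) (hC : 0 ≤ C)
    (Z N : ℕ → ι → Ω → ℝ)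
    (hβ : ∀ t, β t ∈ Set.Ioc (0:ℝ) 1)
    (hstep : ∀ t, (1 - β (t+1)) * β t ≤ β (t+1))
    (hZmeas : ∀ t i, StronglyMeasurable[ℱ (t+1)] (Z t i))
    (hZbdd : ∀ t i, ∀ᵐ ω ∂μ, |Z t i ω| ≤ C)
    (hZmean : ∀ t i, μ[Z t i | ℱ t] =ᵐ[μ] 0)
    (hN0 : ∀ i ω, N 0 i ω = 0)
    (hNrec : ∀ t i ω, N (t+1) i ω = (1 - β t) * N t i ω + β t * Z t i ω) :
    ∀ (w : ℝ) (t : ℕ) (i : ι),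
      ∫ ω, Real.exp (w * N (t+1) i ω) ∂μ ≤ Real.exp (w ^ 2 * β t * C ^ 2 / 2) := by
  have hβpos : ∀ t, 0 < β t := fun t => (hβ t).1
  have hβle : ∀ t, β t ≤ 1 := fun t => (hβ t).2
  -- N is adapted
  have hNmeas : ∀ t i, StronglyMeasurable[ℱ t] (N t i) := by
    intro t
    induction t with
    | zero =>
      intro i
      have : N 0 i = fun _ => (0:ℝ) := funext (hN0 i)
      rw [this]; exact stronglyMeasurable_const
    | succ t ih =>
      intro i
      have : N (t+1) i = fun ω => (1 - β t) * N t i ω + β t * Z t i ω :=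
        funext (hNrec t i)
      rw [this]
      exact (((ih i).mono (ℱ.mono t.le_succ)).const_mul _).add
        ((hZmeas t i).const_mul _)
  -- N is bounded by C a.e.
  have hNbdd : ∀ t i, ∀ᵐ ω ∂μ, |N t i ω| ≤ C := by
    intro t
    induction t with
    | zero => intro i; filter_upwards with ω; simp [hN0, hC]
    | succ t ih =>
      intro i
      filter_upwards [ih i, hZbdd t i] with ω h1 h2
      rw [hNrec]
      calc |(1 - β t) * N t i ω + β t * Z t i ω|
          ≤ |(1 - β t) * N t i ω| + |β t * Z t i ω| := abs_add_le _ _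
        _ = (1 - β t) * |N t i ω| + β t * |Z t i ω| := by
            rw [abs_mul, abs_mul, abs_of_nonneg (by linarith [hβle t]),
              abs_of_nonneg (hβpos t).le]
        _ ≤ (1 - β t) * C + β t * C := by
            have := hβpos t; have := hβle t
            gcongr <;> linarith
        _ = C := by ring
  -- key one-step bound
  have key : ∀ (a b : ℝ) (t : ℕ) (i : ι),
      ∫ ω, Real.exp (a * N t i ω + b * Z t i ω) ∂μ
        ≤ Real.exp (b ^ 2 * C ^ 2 / 2) * ∫ ω, Real.exp (a * N t i ω) ∂μ := by
    intro a b t i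
    have hfmeas : StronglyMeasurable[ℱ t] (fun ω => Real.exp (a * N t i ω)) :=
      Real.continuous_exp.comp_stronglyMeasurable ((hNmeas t i).const_mul a)
    have hfmeas0 : AEStronglyMeasurable (fun ω => Real.exp (a * N t i ω)) μ :=
      (hfmeas.mono (ℱ.le t)).aestronglyMeasurable
    have hZmeas0 : AEStronglyMeasurable (Z t i) μ :=
      ((hZmeas t i).mono (ℱ.le (t+1))).aestronglyMeasurable
    have hfbd : ∀ᵐ ω ∂μ, ‖Real.exp (a * N t i ω)‖ ≤ Real.exp (|a| * C) := by
      filter_upwards [hNbdd t i] with ω h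
      rw [Real.norm_eq_abs, abs_of_pos (Real.exp_pos _), Real.exp_le_exp]
      calc a * N t i ω ≤ |a * N t i ω| := le_abs_self _
        _ = |a| * |N t i ω| := abs_mul _ _
        _ ≤ |a| * C := mul_le_mul_of_nonneg_left h (abs_nonneg a)
    have hfint : Integrable (fun ω => Real.exp (a * N t i ω)) μ :=
      ⟨hfmeas0, HasFiniteIntegral.of_bounded hfbd⟩
    have hZint : Integrable (Z t i) μ :=
      ⟨hZmeas0, HasFiniteIntegral.of_bounded
        ((hZbdd t i).mono fun ω h => by rwa [Real.norm_eq_abs])⟩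
    have hfZint : Integrable (fun ω => Real.exp (a * N t i ω) * Z t i ω) μ := by
      refine ⟨hfmeas0.mul hZmeas0, HasFiniteIntegral.of_bounded (C := Real.exp (|a| * C) * C) ?_⟩
      filter_upwards [hfbd, hZbdd t i] with ω h1 h2
      rw [norm_mul]
      exact mul_le_mul h1 (by rwa [Real.norm_eq_abs])
        (norm_nonneg _) (Real.exp_pos _).le
    -- ∫ f·Z = 0
    have hzero : ∫ ω, Real.exp (a * N t i ω) * Z t i ω ∂μ = 0 := by
      have h1 : μ[(fun ω => Real.exp (a * N t i ω) * Z t i ω) | ℱ t]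
          =ᵐ[μ] fun ω => Real.exp (a * N t i ω) * (μ[Z t i | ℱ t]) ω :=
        condExp_mul_of_stronglyMeasurable_left hfmeas hfZint hZint
      have h2 : (fun ω => Real.exp (a * N t i ω) * (μ[Z t i | ℱ t]) ω)
          =ᵐ[μ] fun _ => (0:ℝ) := by
        filter_upwards [hZmean t i] with ω h
        simp [h]
      calc ∫ ω, Real.exp (a * N t i ω) * Z t i ω ∂μ
          = ∫ ω, (μ[(fun ω => Real.exp (a * N t i ω) * Z t i ω) | ℱ t]) ω ∂μ :=
            (integral_condExp (ℱ.le t)).symm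
        _ = ∫ ω, (0:ℝ) ∂μ := integral_congr_ae (h1.trans h2)
        _ = 0 := integral_zero _ _
    rcases eq_or_lt_of_le hC with hC0 | hC0
    · -- C = 0 : Z = 0 a.e.
      have hZ0 : ∀ᵐ ω ∂μ, Z t i ω = 0 := by
        filter_upwards [hZbdd t i] with ω h
        rw [← hC0] at h
        exact abs_eq_zero.1 (le_antisymm h (abs_nonneg _))
      have : ∫ ω, Real.exp (a * N t i ω + b * Z t i ω) ∂μ
          = ∫ ω, Real.exp (a * N t i ω) ∂μ := by
        refine integral_congr_ae ?_
        filter_upwards [hZ0] with ω h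
        rw [h, mul_zero, add_zero]
      rw [this, ← hC0]
      nlinarith [integral_nonneg (f := fun ω => Real.exp (a * N t i ω)) (fun ω => (Real.exp_pos (a * N t i ω)).le) (μ := μ),
        Real.one_le_exp (by positivity : (0:ℝ) ≤ b ^ 2 * 0 ^ 2 / 2)]
    · -- main case C > 0
      set c : ℝ := Real.sinh (b * C) / C with hc
      have hgint : Integrable
          (fun ω => Real.exp (a * N t i ω) * (Real.cosh (b * C) + c * Z t i ω)) μ := by
        have : (fun ω => Real.exp (a * N t i ω) * (Real.cosh (b * C) + c * Z t i ω))
            = fun ω => Real.cosh (b * C) * Real.exp (a * N t i ω)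
              + c * (Real.exp (a * N t i ω) * Z t i ω) := by
          funext ω; ring
        rw [this]
        exact (hfint.const_mul _).add (hfZint.const_mul _)
      have hlhsint : Integrable (fun ω => Real.exp (a * N t i ω + b * Z t i ω)) μ := by
        have hg : AEStronglyMeasurable (fun ω => Real.exp (b * Z t i ω)) μ :=
          (Real.continuous_exp.comp_stronglyMeasurable
            (((hZmeas t i).const_mul b).mono (ℱ.le (t+1)))).aestronglyMeasurable
        refine ⟨(hfmeas0.mul hg).congr
          (ae_of_all _ fun ω => by simp [← Real.exp_add]),
          HasFiniteIntegral.of_bounded (C := Real.exp (|a| * C + |b| * C)) ?_⟩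
        filter_upwards [hNbdd t i, hZbdd t i] with ω h1 h2
        rw [Real.norm_eq_abs, abs_of_pos (Real.exp_pos _), Real.exp_le_exp]
        have ha : a * N t i ω ≤ |a| * C := by
          calc a * N t i ω ≤ |a * N t i ω| := le_abs_self _
            _ = |a| * |N t i ω| := abs_mul _ _
            _ ≤ |a| * C := mul_le_mul_of_nonneg_left h1 (abs_nonneg a)
        have hb : b * Z t i ω ≤ |b| * C := by
          calc b * Z t i ω ≤ |b * Z t i ω| := le_abs_self _
            _ = |b| * |Z t i ω| := abs_mul _ _
            _ ≤ |b| * C := mul_le_mul_of_nonneg_left h2 (abs_nonneg b)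
        linarith
      have step1 : ∫ ω, Real.exp (a * N t i ω + b * Z t i ω) ∂μ
          ≤ ∫ ω, Real.exp (a * N t i ω) * (Real.cosh (b * C) + c * Z t i ω) ∂μ := by
        refine integral_mono_ae hlhsint hgint ?_
        filter_upwards [hZbdd t i] with ω h
        rw [Real.exp_add]
        exact mul_le_mul_of_nonneg_left (exp_le_cosh_add b C _ hC0 h) (Real.exp_pos _).le
      have step2 : ∫ ω, Real.exp (a * N t i ω) * (Real.cosh (b * C) + c * Z t i ω) ∂μ
          = Real.cosh (b * C) * ∫ ω, Real.exp (a * N t i ω) ∂μ := by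
        have : (fun ω => Real.exp (a * N t i ω) * (Real.cosh (b * C) + c * Z t i ω))
            = fun ω => Real.cosh (b * C) * Real.exp (a * N t i ω)
              + c * (Real.exp (a * N t i ω) * Z t i ω) := by
          funext ω; ring
        rw [this, integral_add (hfint.const_mul _) (hfZint.const_mul _),
          integral_const_mul, integral_const_mul, hzero, mul_zero, add_zero]
      have step3 : Real.cosh (b * C) ≤ Real.exp (b ^ 2 * C ^ 2 / 2) := by
        have := Real.cosh_le_exp_half_sq (b * C)
        simpa [mul_pow] using this
      calc ∫ ω, Real.exp (a * N t i ω + b * Z t i ω) ∂μ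
          ≤ Real.cosh (b * C) * ∫ ω, Real.exp (a * N t i ω) ∂μ := step1.trans_eq step2
        _ ≤ Real.exp (b ^ 2 * C ^ 2 / 2) * ∫ ω, Real.exp (a * N t i ω) ∂μ :=
            mul_le_mul_of_nonneg_right step3
              (integral_nonneg fun ω => (Real.exp_pos _).le)
  -- main induction
  intro w t
  induction t generalizing w with
  | zero =>
    intro i
    have hrw : ∀ ω, w * N 1 i ω = (w * (1 - β 0)) * N 0 i ω + (w * β 0) * Z 0 i ω := by
      intro ω; rw [hNrec]; ring
    have h0 : ∫ ω, Real.exp ((w * (1 - β 0)) * N 0 i ω) ∂μ = 1 := by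
      have : (fun ω => Real.exp ((w * (1 - β 0)) * N 0 i ω)) = fun _ => (1:ℝ) := by
        funext ω; rw [hN0]; simp
      rw [this]; simp
    calc ∫ ω, Real.exp (w * N 1 i ω) ∂μ
        = ∫ ω, Real.exp ((w * (1 - β 0)) * N 0 i ω + (w * β 0) * Z 0 i ω) ∂μ := by
          simp_rw [hrw]
      _ ≤ Real.exp ((w * β 0) ^ 2 * C ^ 2 / 2) * ∫ ω, Real.exp ((w * (1 - β 0)) * N 0 i ω) ∂μ :=
          key _ _ 0 i
      _ = Real.exp ((w * β 0) ^ 2 * C ^ 2 / 2) := by rw [h0, mul_one]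
      _ ≤ Real.exp (w ^ 2 * β 0 * C ^ 2 / 2) := by
          rw [Real.exp_le_exp]
          have h1 := hβpos 0; have h2 := hβle 0
          have h3 : β 0 ^ 2 ≤ β 0 := by nlinarith
          nlinarith [mul_le_mul_of_nonneg_left h3 (sq_nonneg (w * C))]
  | succ t ih =>
    intro i
    have hrw : ∀ ω, w * N (t+2) i ω
        = (w * (1 - β (t+1))) * N (t+1) i ω + (w * β (t+1)) * Z (t+1) i ω := by
      intro ω; rw [hNrec]; ring
    calc ∫ ω, Real.exp (w * N (t+2) i ω) ∂μ
        = ∫ ω, Real.exp ((w * (1 - β (t+1))) * N (t+1) i ω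
            + (w * β (t+1)) * Z (t+1) i ω) ∂μ := by simp_rw [hrw]
      _ ≤ Real.exp ((w * β (t+1)) ^ 2 * C ^ 2 / 2)
            * ∫ ω, Real.exp ((w * (1 - β (t+1))) * N (t+1) i ω) ∂μ := key _ _ (t+1) i
      _ ≤ Real.exp ((w * β (t+1)) ^ 2 * C ^ 2 / 2)
            * Real.exp ((w * (1 - β (t+1))) ^ 2 * β t * C ^ 2 / 2) :=
          mul_le_mul_of_nonneg_left (ih (w * (1 - β (t+1))) i) (Real.exp_pos _).le
      _ = Real.exp ((w * β (t+1)) ^ 2 * C ^ 2 / 2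
            + (w * (1 - β (t+1))) ^ 2 * β t * C ^ 2 / 2) := (Real.exp_add _ _).symm
      _ ≤ Real.exp (w ^ 2 * β (t+1) * C ^ 2 / 2) := by
          rw [Real.exp_le_exp]
          have h1 := hβpos (t+1); have h2 := hβle (t+1)
          have h3 := hβpos t; have h4 := hβle t
          have h5 := hstep t
          have h6 : (1 - β (t+1)) * ((1 - β (t+1)) * β t) ≤ (1 - β (t+1)) * β (t+1) :=
            mul_le_mul_of_nonneg_left h5 (by linarith)
          have h8 : β (t+1) ^ 2 + (1 - β (t+1)) ^ 2 * β t ≤ β (t+1) := by nlinarith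
          nlinarith [mul_le_mul_of_nonneg_left h8 (sq_nonneg (w * C))]
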